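/- Let p be a prime. For every 0 ≤ k ≤ p−1 and every x ∈ ZMod p, one has k! · b_k(x) = (−1)^k · (x+1)(x+2)⋯(x+k) in ZMod p; equivalently, b_k(x) = (−1)^k · binom(x+k, k), where the binomial coefficient is evaluated in ZMod p. In particular b_0 is the constant function 1 and b_{p−1} = δ_0. -/

import Mathlib

/-- The indicator function `δ_0 : ZMod p → ZMod p` of `0`. -/
def delta0 (p : ℕ) : ZMod p → ZMod p := fun x => if x = 0 then 1 else 0

/-- The operator `S − 1` where `S` is the shift `(S f)(x) = f (x − 1)`. -/
def shiftDiff (p : ℕ) (f : ZMod p → ZMod p) : ZMod p → ZMod p :=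
  fun x => f (x - 1) - f x

/-- `b_k = (S − 1)^{p−1−k} (δ_0)` for `0 ≤ k ≤ p − 1`. -/
def bFun (p k : ℕ) : ZMod p → ZMod p :=
  (shiftDiff p)^[p - 1 - k] (delta0 p)

lemma bFun_step (p k : ℕ) (hk : k < p - 1) :
    bFun p k = shiftDiff p (bFun p (k + 1)) := by
  unfold bFun
  have h : p - 1 - k = (p - 1 - (k + 1)) + 1 := by omega
  rw [h, Function.iterate_succ']
  rfl

lemma bFun_top (p : ℕ) : bFun p (p - 1) = delta0 p := by
  unfold bFun
  simp

lemma bFun_base (p : ℕ) (hp : p.Prime) (x : ZMod p) :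
    ((Nat.factorial (p - 1) : ZMod p)) * delta0 p x =
      (-1) ^ (p - 1) * ∏ t ∈ Finset.range (p - 1), (x + (t : ZMod p) + 1) := by
  haveI := Fact.mk hp
  by_cases hx : x = 0
  · subst hx
    have h1 : ∏ t ∈ Finset.range (p - 1), ((0 : ZMod p) + (t : ZMod p) + 1)
        = ((Nat.factorial (p - 1) : ZMod p)) := by
      rw [← Finset.prod_range_add_one_eq_factorial, Nat.cast_prod]
      push_cast
      simp
    have hd : delta0 p 0 = 1 := if_pos rfl
    rw [h1, hd, mul_one, ZMod.wilsons_lemma]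
    have h2 : ((-1 : ZMod p)) ^ (p - 1) * (-1) = (-1) ^ p := by
      rw [← pow_succ]
      congr 1
      have := hp.two_le
      omega
    rw [h2, neg_one_pow_char (ZMod p)]
  · have h0 : delta0 p x = 0 := by simp [delta0, hx]
    rw [h0, mul_zero]
    have hp1 : ((p - 1 : ℕ) : ZMod p) = -1 := by
      rw [Nat.cast_sub hp.one_le, ZMod.natCast_self]
      ring
    have hne : (-x - 1).val ≠ p - 1 := by
      intro h
      apply hx
      have h3 : (-x - 1 : ZMod p) = ((p - 1 : ℕ) : ZMod p) := by
        rw [← h, ZMod.natCast_val, ZMod.cast_id]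
      rw [hp1] at h3
      linear_combination -h3
    have hlt : (-x - 1).val < p := ZMod.val_lt _
    have hmem : (-x - 1).val ∈ Finset.range (p - 1) := by
      rw [Finset.mem_range]; omega
    rw [Finset.prod_eq_zero hmem]
    · ring
    · rw [ZMod.natCast_val, ZMod.cast_id]
      ring

lemma bFun_key (p : ℕ) (hp : p.Prime) :
    ∀ j, j ≤ p - 1 → ∀ x : ZMod p,
      ((Nat.factorial (p - 1 - j) : ZMod p)) * bFun p (p - 1 - j) x =
        (-1) ^ (p - 1 - j) * ∏ t ∈ Finset.range (p - 1 - j), (x + (t : ZMod p) + 1) := by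
  haveI := Fact.mk hp
  intro j
  induction j with
  | zero =>
    intro _ x
    simpa [bFun_top] using bFun_base p hp x
  | succ j ih =>
    intro hj x
    set k := p - 1 - (j + 1) with hkdef
    have hk1 : k + 1 = p - 1 - j := by omega
    have hklt : k < p - 1 := by omega
    have ihx : ∀ y : ZMod p,
        ((Nat.factorial (k + 1) : ZMod p)) * bFun p (k + 1) y =
          (-1) ^ (k + 1) * ∏ t ∈ Finset.range (k + 1), (y + (t : ZMod p) + 1) := by
      intro y
      rw [hk1]
      exact ih (by omega) y
    have hstep : bFun p k x = bFun p (k + 1) (x - 1) - bFun p (k + 1) x := by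
      rw [bFun_step p k hklt]; rfl
    have hcancel : ((k : ZMod p) + 1) ≠ 0 := by
      have : ((k + 1 : ℕ) : ZMod p) ≠ 0 := by
        rw [Ne, ZMod.natCast_eq_zero_iff]
        intro hdvd
        have := Nat.le_of_dvd (by omega) hdvd
        omega
      push_cast at this
      exact this
    apply mul_left_cancel₀ hcancel
    have lhs : ((k : ZMod p) + 1) * (((Nat.factorial k : ZMod p)) * bFun p k x)
        = ((Nat.factorial (k + 1) : ZMod p)) * bFun p (k + 1) (x - 1)
          - ((Nat.factorial (k + 1) : ZMod p)) * bFun p (k + 1) x := by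
      rw [hstep, Nat.factorial_succ]
      push_cast
      ring
    rw [lhs, ihx, ihx]
    have hA : ∏ t ∈ Finset.range (k + 1), ((x - 1) + (t : ZMod p) + 1)
        = (∏ t ∈ Finset.range k, (x + (t : ZMod p) + 1)) * x := by
      rw [Finset.prod_range_succ']
      push_cast
      congr 1
      · apply Finset.prod_congr rfl
        intro t _
        ring
      · ring
    have hB : ∏ t ∈ Finset.range (k + 1), (x + (t : ZMod p) + 1)
        = (∏ t ∈ Finset.range k, (x + (t : ZMod p) + 1)) * (x + k + 1) := by
      rw [Finset.prod_range_succ]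
    rw [hA, hB]
    ring

/-- for a prime `p`, `0 ≤ k ≤ p−1` and `x ∈ ZMod p`,
`k! · b_k(x) = (−1)^k (x+1)(x+2)⋯(x+k)`; equivalently
`b_k(x) = (−1)^k · binom(x+k, k)` evaluated in `ZMod p`. In particular `b_0 = 1`
and `b_{p−1} = δ_0`. -/
theorem bFun_formula (p : ℕ) (hp : p.Prime) (k : ℕ) (hk : k ≤ p - 1) (x : ZMod p) :
    ((Nat.factorial k : ZMod p) * bFun p k x =
        (-1) ^ k * ∏ t ∈ Finset.range k, (x + (t : ZMod p) + 1)) ∧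
    (bFun p k x =
        (-1) ^ k * (∏ t ∈ Finset.range k, (x + (t : ZMod p) + 1)) *
          (Nat.factorial k : ZMod p)⁻¹) ∧
    bFun p 0 = (fun _ : ZMod p => (1 : ZMod p)) ∧
    bFun p (p - 1) = delta0 p := by
  haveI := Fact.mk hp
  have hkk : p - 1 - (p - 1 - k) = k := by omega
  have h1 : (Nat.factorial k : ZMod p) * bFun p k x =
      (-1) ^ k * ∏ t ∈ Finset.range k, (x + (t : ZMod p) + 1) := by
    have := bFun_key p hp (p - 1 - k) (by omega) x
    rwa [hkk] at this
  have hfac : (Nat.factorial k : ZMod p) ≠ 0 := by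
    rw [Ne, ZMod.natCast_eq_zero_iff]
    intro hdvd
    have := (Nat.Prime.dvd_factorial hp).mp hdvd
    have hp2 := hp.two_le
    omega
  refine ⟨h1, ?_, ?_, bFun_top p⟩
  · field_simp
    linear_combination h1
  · funext y
    have h0 : (Nat.factorial 0 : ZMod p) * bFun p 0 y =
        (-1) ^ 0 * ∏ t ∈ Finset.range 0, (y + (t : ZMod p) + 1) := by
      have := bFun_key p hp (p - 1) (le_refl _) y
      simpa [Nat.sub_self] using this
    simpa using h0
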